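/- There exists a bounded linear operator U : ℓ¹ → ℓ¹ with ‖U‖ = 1 such that for every separable Banach space X, every bounded linear operator T : X → X with ‖T‖ ≤ 1 is a linear factor of U; i.e., there exists a surjective bounded linear operator π : ℓ¹ → X with π ∘ U = T ∘ π. -/

import Mathlib

noncomputable local instance : Fact ((1 : ENNReal) ≤ 1) := ⟨le_rfl⟩

open scoped ENNReal

namespace UnivOpAux

abbrev L1 : Type := lp (fun _ : ℕ => ℝ) 1

lemma toReal_one_pos : 0 < (1 : ℝ≥0∞).toReal := by norm_num

lemma summable_norm (f : L1) : Summable fun n => ‖f n‖ := by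
  have := (lp.memℓp f).summable (p := (1 : ℝ≥0∞)) toReal_one_pos
  simpa using this

lemma norm_eq (f : L1) : ‖f‖ = ∑' n, ‖f n‖ := by
  have := lp.norm_eq_tsum_rpow (p := (1 : ℝ≥0∞)) toReal_one_pos f
  simpa using this

lemma norm_single (i : ℕ) (c : ℝ) : ‖(lp.single 1 i c : L1)‖ = |c| := by
  have := lp.norm_single (E := fun _ : ℕ => ℝ) (p := (1 : ℝ≥0∞)) zero_lt_one i c
  simpa [Real.norm_eq_abs] using this

variable {X : Type*} [NormedAddCommGroup X] [NormedSpace ℝ X] [CompleteSpace X]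

lemma norm_smul_le_norm (g : ℕ → X) (hg : ∀ n, ‖g n‖ ≤ 1) (f : L1) (n : ℕ) :
    ‖f n • g n‖ ≤ ‖f n‖ := by
  rw [norm_smul]
  calc ‖f n‖ * ‖g n‖ ≤ ‖f n‖ * 1 := mul_le_mul_of_nonneg_left (hg n) (norm_nonneg _)
    _ = ‖f n‖ := mul_one _

lemma summable_norm_smul (g : ℕ → X) (hg : ∀ n, ‖g n‖ ≤ 1) (f : L1) :
    Summable fun n => ‖f n • g n‖ :=
  Summable.of_nonneg_of_le (fun n => norm_nonneg _) (norm_smul_le_norm g hg f)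
    (summable_norm f)

lemma summable_smul (g : ℕ → X) (hg : ∀ n, ‖g n‖ ≤ 1) (f : L1) :
    Summable fun n => f n • g n :=
  (summable_norm_smul g hg f).of_norm

/-- The canonical contraction `ℓ¹ → X` sending `eₙ` to `g n`. -/
noncomputable def Phi (g : ℕ → X) (hg : ∀ n, ‖g n‖ ≤ 1) : L1 →L[ℝ] X :=
  LinearMap.mkContinuous
    { toFun := fun f => ∑' n, f n • g n
      map_add' := fun f h => by
        show (∑' n, ((f + h : L1) n) • g n) = (∑' n, f n • g n) + ∑' n, h n • g n
        have : ∀ n, ((f + h : L1) n) • g n = f n • g n + h n • g n := by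
          intro n
          rw [lp.coeFn_add, Pi.add_apply, add_smul]
        rw [tsum_congr this, Summable.tsum_add (summable_smul g hg f) (summable_smul g hg h)]
      map_smul' := fun c f => by
        show (∑' n, ((c • f : L1) n) • g n) = c • ∑' n, f n • g n
        have : ∀ n, ((c • f : L1) n) • g n = c • (f n • g n) := by
          intro n
          rw [lp.coeFn_smul, Pi.smul_apply, smul_eq_mul, ← smul_smul]
        rw [tsum_congr this, tsum_const_smul'' c] }
    1
    (fun f => by
      simp only [LinearMap.coe_mk, AddHom.coe_mk, one_mul]
      calc ‖∑' n, f n • g n‖ ≤ ∑' n, ‖f n • g n‖ :=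
            norm_tsum_le_tsum_norm (summable_norm_smul g hg f)
        _ ≤ ∑' n, ‖f n‖ :=
            Summable.tsum_le_tsum (norm_smul_le_norm g hg f) (summable_norm_smul g hg f)
              (summable_norm f)
        _ = ‖f‖ := (norm_eq f).symm)

lemma Phi_apply (g : ℕ → X) (hg : ∀ n, ‖g n‖ ≤ 1) (f : L1) :
    Phi g hg f = ∑' n, f n • g n := rfl

lemma Phi_norm_le (g : ℕ → X) (hg : ∀ n, ‖g n‖ ≤ 1) : ‖Phi g hg‖ ≤ 1 :=
  LinearMap.mkContinuous_norm_le _ zero_le_one _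

lemma Phi_single (g : ℕ → X) (hg : ∀ n, ‖g n‖ ≤ 1) (i : ℕ) (c : ℝ) :
    Phi g hg (lp.single 1 i c) = c • g i := by
  rw [Phi_apply]
  rw [tsum_eq_single i (fun n hn => by
    rw [lp.single_apply_ne _ _ _ hn, zero_smul])]
  rw [lp.single_apply_self]

/-- Surjectivity criterion for a continuous linear map out of a complete space. -/
lemma surjective_of_approx (f : L1 →L[ℝ] X) (C : ℝ) (h0 : 0 ≤ C)
    (h : ∀ y : X, ∃ a : L1, ‖a‖ ≤ C * ‖y‖ ∧ ‖y - f a‖ ≤ ‖y‖ / 2) :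
    Function.Surjective f := by
  intro y
  choose F hF1 hF2 using h
  set yseq : ℕ → X := fun n => (fun z => z - f (F z))^[n] y with hyseq
  have hstep : ∀ n, yseq (n + 1) = yseq n - f (F (yseq n)) := by
    intro n
    exact Function.iterate_succ_apply' (fun z => z - f (F z)) n y
  have hy : ∀ n, ‖yseq n‖ ≤ ‖y‖ / 2 ^ n := by
    intro n
    induction n with
    | zero => simp [hyseq]
    | succ n ih =>
        rw [hstep n]
        calc ‖yseq n - f (F (yseq n))‖ ≤ ‖yseq n‖ / 2 := hF2 _
          _ ≤ ‖y‖ / 2 ^ n / 2 := by linarith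
          _ = ‖y‖ / 2 ^ (n + 1) := by ring
  have hbound : ∀ n, ‖F (yseq n)‖ ≤ C * ‖y‖ * (1 / 2) ^ n := by
    intro n
    calc ‖F (yseq n)‖ ≤ C * ‖yseq n‖ := hF1 _
      _ ≤ C * (‖y‖ / 2 ^ n) := mul_le_mul_of_nonneg_left (hy n) h0
      _ = C * ‖y‖ * (1 / 2) ^ n := by
          rw [div_pow, one_pow]
          ring
  have hsum : Summable fun n => F (yseq n) := by
    apply Summable.of_norm
    exact Summable.of_nonneg_of_le (fun n => norm_nonneg _) hbound
      (summable_geometric_two.mul_left (C * ‖y‖))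
  refine ⟨∑' n, F (yseq n), ?_⟩
  have hfs : HasSum (fun n => f (F (yseq n))) (f (∑' n, F (yseq n))) :=
    hsum.hasSum.mapL f
  have hpartial : ∀ N, ∑ i ∈ Finset.range N, f (F (yseq i)) = y - yseq N := by
    intro N
    induction N with
    | zero => simp [hyseq]
    | succ N ih =>
        rw [Finset.sum_range_succ, ih, hstep N]
        abel
  have h1 : Filter.Tendsto (fun N => ∑ i ∈ Finset.range N, f (F (yseq i)))
      Filter.atTop (nhds (f (∑' n, F (yseq n)))) := hfs.tendsto_sum_nat
  have h2 : Filter.Tendsto (fun N => ∑ i ∈ Finset.range N, f (F (yseq i)))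
      Filter.atTop (nhds y) := by
    have hz : Filter.Tendsto yseq Filter.atTop (nhds 0) := by
      apply squeeze_zero_norm hy
      have : Filter.Tendsto (fun n : ℕ => ‖y‖ * (1 / 2) ^ n) Filter.atTop (nhds 0) := by
        have := (tendsto_pow_atTop_nhds_zero_of_lt_one
          (by norm_num : (0:ℝ) ≤ 1/2) (by norm_num : (1:ℝ)/2 < 1)).const_mul ‖y‖
        simpa using this
      refine this.congr (fun n => ?_)
      rw [div_pow, one_pow]
      ring
    have := (tendsto_const_nhds (x := y) (f := Filter.atTop (α := ℕ))).sub hz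
    rw [sub_zero] at this
    exact this.congr (fun N => (hpartial N).symm)
  exact tendsto_nhds_unique h1 h2

end UnivOpAux

open UnivOpAux in
theorem universal_operator_on_l1 :
    ∃ U : lp (fun _ : ℕ => ℝ) 1 →L[ℝ] lp (fun _ : ℕ => ℝ) 1, ‖U‖ = 1 ∧
      ∀ (X : Type) [NormedAddCommGroup X] [NormedSpace ℝ X] [CompleteSpace X]
        [TopologicalSpace.SeparableSpace X] (T : X →L[ℝ] X), ‖T‖ ≤ 1 →
        ∃ π : lp (fun _ : ℕ => ℝ) 1 →L[ℝ] X,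
          Function.Surjective π ∧ ∀ v, π (U v) = T (π v) := by
  classical
  -- a pairing bijection and the "shift" injection on indices
  set d : ℕ ≃ ℕ × ℕ := (Denumerable.eqv (ℕ × ℕ)).symm with hd
  set σ : ℕ → ℕ := fun n => d.symm ((d n).1, (d n).2 + 1) with hσ
  have hdσ : ∀ n, d (σ n) = ((d n).1, (d n).2 + 1) := fun n => d.apply_symm_apply _
  -- the universal operator
  have hge : ∀ n, ‖(lp.single 1 (σ n) (1:ℝ) : L1)‖ ≤ 1 := fun n => by
    rw [norm_single]; norm_num
  set U : L1 →L[ℝ] L1 := Phi (fun n => lp.single 1 (σ n) (1:ℝ)) hge with hU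
  have hUsingle : ∀ (i : ℕ) (c : ℝ), U (lp.single 1 i c) = lp.single 1 (σ i) c := by
    intro i c
    rw [hU, Phi_single]
    rw [← lp.single_smul, smul_eq_mul, mul_one]
  have hUnorm : ‖U‖ = 1 := by
    refine le_antisymm (Phi_norm_le _ _) ?_
    have h1 : ‖(lp.single 1 0 (1:ℝ) : L1)‖ = 1 := by rw [norm_single]; norm_num
    have := U.le_opNorm (lp.single 1 0 (1:ℝ))
    rw [hUsingle 0 1, norm_single, h1, mul_one] at this
    simpa using this
  refine ⟨U, hUnorm, ?_⟩
  intro X _ _ _ _ T hT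
  haveI : Nonempty X := ⟨0⟩
  obtain ⟨u, hu⟩ := TopologicalSpace.exists_dense_seq X
  -- normalized dense sequence in the ball of radius 1/2
  set x : ℕ → X := fun m => (2 * ‖u m‖)⁻¹ • u m with hx
  have hxnorm : ∀ m, ‖x m‖ ≤ 1 := by
    intro m
    rcases eq_or_ne (u m) 0 with h | h
    · simp [hx, h]
    · have hpos : 0 < ‖u m‖ := norm_pos_iff.mpr h
      rw [hx]
      simp only [norm_smul, norm_inv, Real.norm_eq_abs]
      rw [abs_of_pos (by positivity)]
      rw [inv_mul_eq_div, div_le_one (by positivity)]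
      nlinarith
  have hTpow : ∀ (k : ℕ) (z : X), ‖(T ^ k) z‖ ≤ ‖z‖ := by
    intro k
    induction k with
    | zero => intro z; simp
    | succ k ih =>
        intro z
        rw [pow_succ']
        calc ‖(T * T ^ k) z‖ = ‖T ((T ^ k) z)‖ := by rw [ContinuousLinearMap.mul_apply]
          _ ≤ ‖T‖ * ‖(T ^ k) z‖ := T.le_opNorm _
          _ ≤ 1 * ‖z‖ := mul_le_mul hT (ih z) (norm_nonneg _) zero_le_one
          _ = ‖z‖ := one_mul _
  set g : ℕ → X := fun n => (T ^ (d n).2) (x (d n).1) with hg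
  have hgle : ∀ n, ‖g n‖ ≤ 1 := fun n => (hTpow _ _).trans (hxnorm _)
  set π : L1 →L[ℝ] X := Phi g hgle with hπ
  have hgshift : ∀ n, g (σ n) = T (g n) := by
    intro n
    rw [hg]
    simp only []
    rw [hdσ n, pow_succ']
    rfl
  refine ⟨π, ?_, ?_⟩
  · -- surjectivity
    apply surjective_of_approx π 3 (by norm_num)
    intro y
    rcases eq_or_ne y 0 with rfl | hy0
    · exact ⟨0, by simp, by simp⟩
    have hy : 0 < ‖y‖ := norm_pos_iff.mpr hy0
    obtain ⟨m, hm⟩ := hu.exists_dist_lt y (half_pos hy)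
    have humy : ‖y - u m‖ < ‖y‖ / 2 := by rwa [← dist_eq_norm]
    have hum : u m ≠ 0 := by
      intro h
      rw [h, sub_zero] at humy
      linarith
    have humpos : 0 < ‖u m‖ := norm_pos_iff.mpr hum
    have humle : ‖u m‖ ≤ ‖y‖ + ‖y‖ / 2 := by
      have h2 := norm_sub_norm_le (u m) y
      rw [norm_sub_rev] at h2
      linarith
    refine ⟨lp.single 1 (d.symm (m, 0)) (2 * ‖u m‖), ?_, ?_⟩
    · rw [norm_single, abs_of_pos (by positivity)]
      linarith
    · have hπa : π (lp.single 1 (d.symm (m, 0)) (2 * ‖u m‖)) = u m := by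
        rw [hπ, Phi_single, hg]
        simp only []
        rw [d.apply_symm_apply]
        simp only [pow_zero, ContinuousLinearMap.one_apply, hx]
        rw [smul_smul, mul_inv_cancel₀ (by positivity), one_smul]
      rw [hπa]
      linarith
  · -- intertwining
    intro v
    have h1 : HasSum (fun i : ℕ => (lp.single 1 i (v i) : L1)) v :=
      lp.hasSum_single (by norm_num) v
    have hA : HasSum (fun i : ℕ => π (U (lp.single 1 i (v i)))) (π (U v)) :=
      (h1.mapL U).mapL π
    have hB : HasSum (fun i : ℕ => T (π (lp.single 1 i (v i)))) (T (π v)) :=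
      (h1.mapL π).mapL T
    have hkey : (fun i : ℕ => π (U (lp.single 1 i (v i)))) =
        fun i : ℕ => T (π (lp.single 1 i (v i))) := by
      funext i
      rw [hUsingle, hπ, Phi_single, Phi_single, hgshift, map_smul]
    rw [hkey] at hA
    exact hA.unique hB
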